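/- Let C = ⋂_{k=1}^N C_k where each C_k ⊆ ℝⁿ is convex and bounded, and suppose 0 ∈ int(C), with B̄(0,r) ⊆ C ⊆ B̄(0,R) for some 0 < r ≤ R. Then for every x ∈ ℝⁿ: max_{1≤k≤N} d(x, C_k) ≤ d(x, C) ≤ (R/r) · max_{1≤k≤N} d(x, C_k). -/

import Mathlib

open Metric Set Pointwise

/-- Let `C = ⋂_{k=1}^N C_k` with each `C_k ⊆ ℝⁿ` convex and bounded, and suppose
`B̄(0,r) ⊆ C ⊆ B̄(0,R)` with `0 < r ≤ R`. Then for every `x`,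
`max_k d(x, C_k) ≤ d(x, C) ≤ (R/r) · max_k d(x, C_k)`. -/
theorem stmt_15 {n N : ℕ} (hN : 0 < N) (C : Fin N → Set (EuclideanSpace ℝ (Fin n)))
    (hconv : ∀ i, Convex ℝ (C i)) (hbd : ∀ i, Bornology.IsBounded (C i))
    (r R : ℝ) (hr : 0 < r) (hrR : r ≤ R)
    (hrC : Metric.closedBall 0 r ⊆ ⋂ i, C i)
    (hCR : (⋂ i, C i) ⊆ Metric.closedBall 0 R) :
    ∀ x : EuclideanSpace ℝ (Fin n),
      (∀ i, Metric.infDist x (C i) ≤ Metric.infDist x (⋂ i, C i)) ∧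
      ∃ i, Metric.infDist x (⋂ i, C i) ≤ (R / r) * Metric.infDist x (C i) := by
  intro x
  have hR : 0 < R := hr.trans_le hrR
  have h0S : (0 : EuclideanSpace ℝ (Fin n)) ∈ ⋂ i, C i :=
    hrC (by simp [hr.le])
  have hSne : (⋂ i, C i).Nonempty := ⟨0, h0S⟩
  have hball : ∀ i, Metric.ball (0 : EuclideanSpace ℝ (Fin n)) r ⊆ C i := fun i =>
    Metric.ball_subset_closedBall.trans (hrC.trans (Set.iInter_subset _ i))
  have habs : ∀ i, Absorbent ℝ (C i) := fun i =>
    (absorbent_ball_zero hr).mono (hball i)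
  have habsS : Absorbent ℝ (⋂ i, C i) :=
    (absorbent_ball_zero hr).mono (Metric.ball_subset_closedBall.trans hrC)
  have h0C : ∀ i, (0 : EuclideanSpace ℝ (Fin n)) ∈ C i := fun i =>
    Set.iInter_subset _ i h0S
  have hCne : ∀ i, (C i).Nonempty := fun i => ⟨0, h0C i⟩
  constructor
  · intro i
    exact Metric.infDist_le_infDist_of_subset (Set.iInter_subset _ i) hSne
  -- gauge bound: gauge (C i) x ≤ 1 + infDist x (C i) / r
  have hgauge_le : ∀ i, gauge (C i) x ≤ 1 + Metric.infDist x (C i) / r := by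
    intro i
    have key : ∀ y ∈ C i, gauge (C i) x ≤ 1 + dist x y / r := by
      intro y hy
      calc gauge (C i) x = gauge (C i) (y + (x - y)) := by congr 1; abel
        _ ≤ gauge (C i) y + gauge (C i) (x - y) := gauge_add_le (hconv i) (habs i) _ _
        _ ≤ 1 + ‖x - y‖ / r := by
            refine add_le_add (gauge_le_one_of_mem hy) ?_
            exact (gauge_mono (absorbent_ball_zero hr) (hball i) (x - y)).trans_eq
              (gauge_ball hr.le _)
        _ = 1 + dist x y / r := by rw [dist_eq_norm]
    by_contra h
    push_neg at h
    have h' : Metric.infDist x (C i) < (gauge (C i) x - 1) * r := by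
      have h1 : Metric.infDist x (C i) / r < gauge (C i) x - 1 := by linarith
      calc Metric.infDist x (C i) = Metric.infDist x (C i) / r * r := by field_simp
        _ < (gauge (C i) x - 1) * r := mul_lt_mul_of_pos_right h1 hr
    obtain ⟨y, hy, hdy⟩ := (Metric.infDist_lt_iff (hCne i)).1 h'
    have h2 := key y hy
    have h3 : dist x y / r < gauge (C i) x - 1 := (div_lt_iff₀ hr).2 hdy
    linarith
  -- choose i maximizing gauge (C i) x
  haveI : Nonempty (Fin N) := ⟨⟨0, hN⟩⟩
  obtain ⟨i, hi⟩ := Finite.exists_max (fun j => gauge (C j) x)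
  refine ⟨i, ?_⟩
  set g : ℝ := gauge (⋂ j, C j) x with hg
  -- gauge of intersection ≤ gauge (C i) x
  have hgS : g ≤ gauge (C i) x := by
    refine le_of_forall_gt_imp_ge_of_dense fun t ht => ?_
    have ht0 : 0 < t := (gauge_nonneg _).trans_lt ht
    have hmem : t⁻¹ • x ∈ ⋂ j, C j := by
      refine Set.mem_iInter.2 fun j => ?_
      refine gauge_lt_one_subset_self (hconv j) (h0C j) (habs j) ?_
      have h1 : gauge (C j) (t⁻¹ • x) = t⁻¹ * gauge (C j) x := by
        rw [gauge_smul_of_nonneg (by positivity : (0:ℝ) ≤ t⁻¹)]; rfl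
      rw [Set.mem_setOf_eq, h1, inv_mul_eq_div, div_lt_one ht0]
      exact (hi j).trans_lt ht
    have hx' : x ∈ t • ⋂ j, C j :=
      Set.mem_smul_set.2 ⟨t⁻¹ • x, hmem,
        by rw [smul_smul, mul_inv_cancel₀ ht0.ne', one_smul]⟩
    exact gauge_le_of_mem ht0.le hx'
  -- infDist x S ≤ (max g 1 - 1) * R
  have hdistS : Metric.infDist x (⋂ j, C j) ≤ (max g 1 - 1) * R := by
    have key : ∀ t, max g 1 < t → Metric.infDist x (⋂ j, C j) ≤ (t - 1) * R := by
      intro t ht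
      have htg : g < t := (le_max_left _ _).trans_lt ht
      have ht1 : 1 < t := (le_max_right _ _).trans_lt ht
      have ht0 : 0 < t := zero_lt_one.trans ht1
      have hmem : t⁻¹ • x ∈ ⋂ j, C j := by
        refine Set.mem_iInter.2 fun j => ?_
        refine gauge_lt_one_subset_self (hconv j) (h0C j) (habs j) ?_
        have h1 : gauge (C j) (t⁻¹ • x) = t⁻¹ * gauge (C j) x := by
          rw [gauge_smul_of_nonneg (by positivity : (0:ℝ) ≤ t⁻¹)]; rfl
        have hjg : gauge (C j) x ≤ g := gauge_mono habsS (Set.iInter_subset _ j) x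
        rw [Set.mem_setOf_eq, h1, inv_mul_eq_div, div_lt_one ht0]
        exact hjg.trans_lt htg
      have hnorm : ‖t⁻¹ • x‖ ≤ R := by
        have := hCR hmem
        rwa [Metric.mem_closedBall, dist_zero_right] at this
      have hts : x - t⁻¹ • x = (t - 1) • (t⁻¹ • x) := by
        rw [smul_smul, sub_mul, mul_inv_cancel₀ ht0.ne', one_mul, sub_smul, one_smul]
      calc Metric.infDist x (⋂ j, C j) ≤ dist x (t⁻¹ • x) :=
            Metric.infDist_le_dist_of_mem hmem
        _ = ‖x - t⁻¹ • x‖ := dist_eq_norm _ _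
        _ = (t - 1) * ‖t⁻¹ • x‖ := by
            rw [hts, norm_smul, Real.norm_eq_abs, abs_of_nonneg (by linarith : (0:ℝ) ≤ t - 1)]
        _ ≤ (t - 1) * R := mul_le_mul_of_nonneg_left hnorm (by linarith)
    refine le_of_forall_gt_imp_ge_of_dense fun s hs => ?_
    have hts : max g 1 < s / R + 1 := by
      have h1 : max g 1 - 1 < s / R := by rw [lt_div_iff₀ hR]; linarith
      linarith
    have h2 := key (s / R + 1) hts
    calc Metric.infDist x (⋂ j, C j) ≤ (s / R + 1 - 1) * R := h2
      _ = s := by field_simp; ring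
  -- conclude
  have hfin : (max g 1 - 1) * R ≤ (R / r) * Metric.infDist x (C i) := by
    have hd : 0 ≤ Metric.infDist x (C i) / r := div_nonneg Metric.infDist_nonneg hr.le
    have h1 : max g 1 - 1 ≤ Metric.infDist x (C i) / r := by
      rcases max_cases g 1 with ⟨hm, _⟩ | ⟨hm, _⟩
      · rw [hm]
        have := hgS.trans (hgauge_le i)
        linarith
      · rw [hm]; linarith
    calc (max g 1 - 1) * R ≤ (Metric.infDist x (C i) / r) * R :=
          mul_le_mul_of_nonneg_right h1 hR.le
      _ = (R / r) * Metric.infDist x (C i) := by field_simp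
  exact hdistS.trans hfin
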